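/- (Katz–Mazur comparison.) Let D be a φ-module over Q_p of dimension d (φ bijective) and M a Z_p-lattice in D. Then the Smith polygon of φ on M and the Newton polygon of det_D(1 − xφ) have the same endpoints, and the Smith polygon lies on or below the Newton polygon. Equivalently, if s_1 ≤ ⋯ ≤ s_d are the valuations of the elementary divisors of φ(M) in M and t_1 ≤ ⋯ ≤ t_d the valuations of the eigenvalues of φ (with multiplicity), then s_1 + ⋯ + s_k ≤ t_1 + ⋯ + t_k for all k, with equality at k = d. -/

import Mathlib

open Polynomial Finset

-- A: Gauss-norm style bound for coefficient of a product of (≤ degree 1) polys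
lemma km_coeff_prod_le {F : Type*} [NormedField F] [IsUltrametricDist F]
    {ι : Type*} (G : Finset ι) (g : ι → F[X]) (u : ι → ℝ) (r : ℝ) (hr : 0 < r)
    (hdeg : ∀ i, (g i).natDegree ≤ 1)
    (h0 : ∀ i, ‖(g i).coeff 0‖ ≤ u i) (h1 : ∀ i, ‖(g i).coeff 1‖ * r ≤ u i) :
    ∀ m, ‖(∏ i ∈ G, g i).coeff m‖ * r ^ m ≤ ∏ i ∈ G, u i := by
  classical
  induction G using Finset.cons_induction with
  | empty =>
      intro m
      rcases Nat.eq_zero_or_pos m with rfl | hm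
      · simp
      · rw [Finset.prod_empty, Polynomial.coeff_one, if_neg (by omega), norm_zero, zero_mul]
        simp
  | cons a G ha ih =>
      intro m
      rw [Finset.prod_cons, Finset.prod_cons]
      have hu : ∀ i, 0 ≤ u i := fun i => le_trans (norm_nonneg _) (h0 i)
      have huG : 0 ≤ ∏ i ∈ G, u i := Finset.prod_nonneg fun i _ => hu i
      rw [Polynomial.coeff_mul]
      have key : ∀ q ∈ Finset.HasAntidiagonal.antidiagonal m,
          ‖(g a).coeff q.1 * (∏ i ∈ G, g i).coeff q.2‖ ≤ (u a * ∏ i ∈ G, u i) / r ^ m := by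
        rintro ⟨x, y⟩ hq
        rw [Finset.HasAntidiagonal.mem_antidiagonal] at hq
        rcases Nat.lt_or_ge x 2 with hx | hx
        · have hxy : r ^ m = r ^ x * r ^ y := by rw [← pow_add, hq]
          rw [norm_mul, le_div_iff₀ (by positivity), hxy]
          have hb : ‖(∏ i ∈ G, g i).coeff y‖ * r ^ y ≤ ∏ i ∈ G, u i := ih y
          have ha' : ‖(g a).coeff x‖ * r ^ x ≤ u a := by
            interval_cases x
            · simpa using h0 a
            · simpa [pow_one] using h1 a
          calc ‖(g a).coeff x‖ * ‖(∏ i ∈ G, g i).coeff y‖ * (r ^ x * r ^ y)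
              = (‖(g a).coeff x‖ * r ^ x) * (‖(∏ i ∈ G, g i).coeff y‖ * r ^ y) := by ring
            _ ≤ u a * ∏ i ∈ G, u i := by
                apply mul_le_mul ha' hb (by positivity) (hu a)
        · have : (g a).coeff x = 0 :=
            Polynomial.coeff_eq_zero_of_natDegree_lt (lt_of_le_of_lt (hdeg a) (by omega))
          rw [this, zero_mul, norm_zero]
          exact div_nonneg (mul_nonneg (hu a) huG) (by positivity)
      have hC : (0:ℝ) ≤ (u a * ∏ i ∈ G, u i) / r ^ m :=
        div_nonneg (mul_nonneg (hu a) huG) (by positivity)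
      have := IsUltrametricDist.norm_sum_le_of_forall_le_of_nonneg hC key
      calc ‖∑ q ∈ Finset.HasAntidiagonal.antidiagonal m, (g a).coeff q.1 * (∏ i ∈ G, g i).coeff q.2‖ * r ^ m
          ≤ ((u a * ∏ i ∈ G, u i) / r ^ m) * r ^ m := by
            apply mul_le_mul_of_nonneg_right this (by positivity)
        _ = u a * ∏ i ∈ G, u i := by field_simp



lemma km_strictMono_le {v d : ℕ} (g : Fin v → Fin d) (hg : StrictMono g) :
    ∀ j : Fin v, (j : ℕ) ≤ (g j : ℕ) := by
  have key : ∀ n (h : n < v), n ≤ (g ⟨n, h⟩ : ℕ) := by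
    intro n
    induction n with
    | zero => intro h; exact Nat.zero_le _
    | succ n ih =>
        intro h
        have hn : n < v := by omega
        have h1 : (g ⟨n, hn⟩ : ℕ) < (g ⟨n+1, h⟩ : ℕ) := hg (by simp [Fin.lt_def])
        have h2 := ih hn
        omega
  intro j
  have := key j.val j.isLt
  simpa using this

lemma km_sum_over_subset {d v : ℕ} (S : Finset (Fin d)) (hS : S.card = v) (f : Fin d → ℚ) :
    ∑ i ∈ S, f i = ∑ j : Fin v, f (S.orderEmbOfFin hS j) := by
  classical
  have hSeq : S = Finset.univ.map (S.orderEmbOfFin hS).toEmbedding := by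
    ext x
    simp only [Finset.mem_map, Finset.mem_univ, true_and, RelEmbedding.coe_toEmbedding]
    constructor
    · intro hx
      have : x ∈ Set.range (S.orderEmbOfFin hS) := by
        rw [Finset.range_orderEmbOfFin]; exact hx
      obtain ⟨j, hj⟩ := this
      exact ⟨j, hj⟩
    · rintro ⟨j, rfl⟩
      exact Finset.orderEmbOfFin_mem S hS j
  conv_lhs => rw [hSeq]
  rw [Finset.sum_map]
  rfl

lemma km_subset_sum_ge {d v : ℕ} (t' : ℕ → ℚ) (ht : Monotone t')
    (S : Finset (Fin d)) (hS : S.card = v) :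
    ∑ j ∈ Finset.range v, t' j ≤ ∑ i ∈ S, t' i.val := by
  rw [km_sum_over_subset S hS, ← Fin.sum_univ_eq_sum_range]
  apply Finset.sum_le_sum
  intro j _
  exact ht (km_strictMono_le _ (S.orderEmbOfFin hS).strictMono j)

lemma km_subset_sum_gt {d v : ℕ} (t' : ℕ → ℚ) (ht : Monotone t')
    (S : Finset (Fin d)) (hS : S.card = v + 1) (hex : ∃ i ∈ S, v + 1 ≤ i.val) :
    (∑ j ∈ Finset.range v, t' j) + t' (v + 1) ≤ ∑ i ∈ S, t' i.val := by
  classical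
  rw [km_sum_over_subset S hS]
  set g := S.orderEmbOfFin hS with hg
  -- the last element of S has value ≥ v+1
  obtain ⟨i, hiS, hiv⟩ := hex
  have hrange : i ∈ Set.range g := by rw [hg, Finset.range_orderEmbOfFin]; exact hiS
  obtain ⟨j₀, hj₀⟩ := hrange
  have hlast : (v + 1 : ℕ) ≤ (g (Fin.last v) : ℕ) := by
    have : (g j₀ : Fin d) ≤ g (Fin.last v) := g.monotone (Fin.le_last j₀)
    calc (v+1 : ℕ) ≤ (i : ℕ) := hiv
      _ = (g j₀ : ℕ) := by rw [hj₀]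
      _ ≤ (g (Fin.last v) : ℕ) := this
  rw [Fin.sum_univ_castSucc]
  have h1 : ∑ j ∈ Finset.range v, t' j ≤ ∑ j : Fin v, t' (g j.castSucc : ℕ) := by
    rw [← Fin.sum_univ_eq_sum_range]
    apply Finset.sum_le_sum
    intro j _
    refine ht ?_
    have := km_strictMono_le _ g.strictMono j.castSucc
    simpa using this
  have h2 : t' (v + 1) ≤ t' (g (Fin.last v) : ℕ) := ht hlast
  linarith


-- charpoly coefficient bound from column norm bounds
lemma km_charpoly_coeff_bound {F : Type*} [NormedField F] [IsUltrametricDist F]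
    {d : ℕ} (A : Matrix (Fin d) (Fin d) F) (w : Fin d → ℝ) (r : ℝ) (hr : 0 < r)
    (hA : ∀ i j, ‖A i j‖ ≤ w j) (m : ℕ) :
    ‖(Matrix.charpoly A).coeff m‖ * r ^ m ≤ ∏ j, max (w j) r := by
  classical
  rw [Matrix.charpoly, Matrix.det_apply]
  rw [Polynomial.finset_sum_coeff]
  have hu : ∀ j, (0:ℝ) ≤ max (w j) r := fun j => le_trans hr.le (le_max_right _ _)
  have hC : (0:ℝ) ≤ (∏ j, max (w j) r) / r ^ m :=
    div_nonneg (Finset.prod_nonneg fun j _ => hu j) (by positivity)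
  have key : ∀ σ ∈ (Finset.univ : Finset (Equiv.Perm (Fin d))),
      ‖(Equiv.Perm.sign σ • ∏ i, (Matrix.charmatrix A) (σ i) i : F[X]).coeff m‖
        ≤ (∏ j, max (w j) r) / r ^ m := by
    intro σ _
    have hterm : ‖(∏ i, (Matrix.charmatrix A) (σ i) i).coeff m‖ * r ^ m
        ≤ ∏ j, max (w j) r := by
      apply km_coeff_prod_le Finset.univ _ _ r hr
      · intro i
        by_cases h : σ i = i
        · rw [h, Matrix.charmatrix_apply_eq]
          exact le_trans (Polynomial.natDegree_X_sub_C_le _) le_rfl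
        · rw [Matrix.charmatrix_apply_ne _ _ _ h]
          simp
      · intro i
        by_cases h : σ i = i
        · rw [h, Matrix.charmatrix_apply_eq]
          simp only [Polynomial.coeff_sub, Polynomial.coeff_X_zero, Polynomial.coeff_C_zero,
            zero_sub, norm_neg]
          exact le_trans (hA i i) (le_max_left _ _)
        · rw [Matrix.charmatrix_apply_ne _ _ _ h]
          simp only [Polynomial.coeff_neg, Polynomial.coeff_C_zero, norm_neg]
          exact le_trans (hA (σ i) i) (le_max_left _ _)
      · intro i
        by_cases h : σ i = i
        · rw [h, Matrix.charmatrix_apply_eq]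
          simp only [Polynomial.coeff_sub, Polynomial.coeff_X_one]
          have : ‖(1:F) - (Polynomial.C (A i i)).coeff 1‖ = 1 := by
            rw [Polynomial.coeff_C, if_neg one_ne_zero, sub_zero, norm_one]
          rw [this, one_mul]
          exact le_max_right _ _
        · rw [Matrix.charmatrix_apply_ne _ _ _ h]
          simp only [Polynomial.coeff_neg, Polynomial.coeff_C, if_neg one_ne_zero, neg_zero,
            norm_zero, zero_mul]
          all_goals exact hu i
    have hsign : ‖(Equiv.Perm.sign σ • ∏ i, (Matrix.charmatrix A) (σ i) i : F[X]).coeff m‖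
        = ‖(∏ i, (Matrix.charmatrix A) (σ i) i).coeff m‖ := by
      rcases Int.units_eq_one_or (Equiv.Perm.sign σ) with h | h <;>
        simp [h, Polynomial.coeff_smul, norm_neg]
    rw [hsign, le_div_iff₀ (by positivity : (0:ℝ) < r ^ m)]
    exact hterm
  have := IsUltrametricDist.norm_sum_le_of_forall_le_of_nonneg hC key
  calc ‖∑ σ : Equiv.Perm (Fin d),
        (Equiv.Perm.sign σ • ∏ i, (Matrix.charmatrix A) (σ i) i : F[X]).coeff m‖ * r ^ m
      ≤ ((∏ j, max (w j) r) / r ^ m) * r ^ m := mul_le_mul_of_nonneg_right this (by positivity)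
    _ = ∏ j, max (w j) r := by field_simp


lemma km_norm_add_eq {K : Type*} [NormedField K] [IsUltrametricDist K]
    {x y : K} (h : ‖y‖ < ‖x‖) : ‖x + y‖ = ‖x‖ := by
  have h1 : ‖x + y‖ ≤ ‖x‖ := le_trans (IsUltrametricDist.norm_add_le_max x y) (by simp [h.le])
  have h2 : ‖x‖ ≤ max ‖x + y‖ ‖y‖ := by
    calc ‖x‖ = ‖x + y - y‖ := by ring_nf
      _ ≤ max ‖x + y‖ ‖-y‖ := by rw [sub_eq_add_neg]; exact IsUltrametricDist.norm_add_le_max _ _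
      _ = max ‖x + y‖ ‖y‖ := by rw [norm_neg]
  rcases max_cases ‖x + y‖ ‖y‖ with ⟨he, _⟩ | ⟨he, _⟩
  · rw [he] at h2; exact le_antisymm h1 h2
  · rw [he] at h2; exact absurd (lt_of_le_of_lt h2 h) (lt_irrefl _)

-- the filter {i < v} as a finset of Fin d
lemma km_filter_card {d v : ℕ} (hv : v ≤ d) :
    (Finset.univ.filter (fun i : Fin d => (i : ℕ) < v)) =
      Finset.univ.map (Fin.castLEEmb hv) := by
  ext x
  simp only [Finset.mem_filter, Finset.mem_univ, true_and, Finset.mem_map]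
  constructor
  · intro hx; exact ⟨⟨x.val, hx⟩, by simp [Fin.castLEEmb, Fin.castLE]⟩
  · rintro ⟨j, rfl⟩; simpa [Fin.castLEEmb, Fin.castLE] using j.isLt

lemma km_vertex_coeff {K : Type*} [NormedField K] [IsUltrametricDist K]
    {d : ℕ} (α : Fin d → K) (t' : ℕ → ℚ) (ht' : Monotone t')
    (pR : ℝ) (hp : 1 < pR)
    (hα : ∀ i : Fin d, ‖α i‖ = pR ^ (-(t' i.val : ℝ)))
    (v : ℕ) (hv0 : 0 < v) (hv : v ≤ d)
    (hstrict : v < d → t' (v - 1) < t' v) :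
    ‖(∏ i, (X - C (α i))).coeff (d - v)‖
      = pR ^ (-((∑ j ∈ Finset.range v, t' j : ℚ) : ℝ)) := by
  classical
  have hp0 : (0:ℝ) < pR := lt_trans one_pos hp
  have hrw : (∏ i, (X - C (α i))) = ∏ i, (X + C (-α i)) := by
    congr 1; ext i; rw [map_neg, sub_eq_add_neg]
  rw [hrw]
  have hdv : d - v ≤ (Finset.univ : Finset (Fin d)).card := by
    rw [Finset.card_univ, Fintype.card_fin]; omega
  rw [Finset.prod_X_add_C_coeff _ _ hdv]
  have hcard : (Finset.univ : Finset (Fin d)).card - (d - v) = v := by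
    rw [Finset.card_univ, Fintype.card_fin]; omega
  rw [hcard]
  set S₀ : Finset (Fin d) := Finset.univ.filter (fun i : Fin d => (i : ℕ) < v) with hS₀
  have hS₀card : S₀.card = v := by
    rw [hS₀, km_filter_card hv, Finset.card_map, Finset.card_univ, Fintype.card_fin]
  have hS₀mem : S₀ ∈ Finset.powersetCard v (Finset.univ : Finset (Fin d)) := by
    rw [Finset.mem_powersetCard]; exact ⟨Finset.subset_univ _, hS₀card⟩
  -- norm of product over an arbitrary S of card v
  have hprodnorm : ∀ S : Finset (Fin d), ‖∏ i ∈ S, (-α i)‖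
      = pR ^ (-((∑ i ∈ S, t' i.val : ℚ) : ℝ)) := by
    intro S
    rw [norm_prod]
    have : ∀ i ∈ S, ‖-α i‖ = pR ^ (-(t' i.val : ℝ)) := by
      intro i _; rw [norm_neg, hα]
    rw [Finset.prod_congr rfl this, ← Real.rpow_sum_of_pos hp0]
    congr 1
    push_cast
    rw [← Finset.sum_neg_distrib]
  -- the main term
  have hmain : ‖∏ i ∈ S₀, (-α i)‖ = pR ^ (-((∑ j ∈ Finset.range v, t' j : ℚ) : ℝ)) := by
    rw [hprodnorm S₀]
    congr 2
    rw [hS₀, km_filter_card hv, Finset.sum_map]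
    rw [← Fin.sum_univ_eq_sum_range (fun j => t' j) v]
    rfl
  rw [← Finset.add_sum_erase _ _ hS₀mem]
  rcases Nat.eq_zero_or_pos ((Finset.powersetCard v (Finset.univ : Finset (Fin d))).erase S₀).card
    with hemp | hpos
  · rw [Finset.card_eq_zero] at hemp
    rw [hemp, Finset.sum_empty, add_zero, hmain]
  · -- bound the rest strictly
    obtain ⟨v', rfl⟩ : ∃ v', v = v' + 1 := ⟨v - 1, by omega⟩
    have hrest : ‖∑ S ∈ (Finset.powersetCard (v'+1) (Finset.univ : Finset (Fin d))).erase S₀,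
        ∏ i ∈ S, (-α i)‖ ≤ pR ^ (-(((∑ j ∈ Finset.range v', t' j) + t' (v'+1) : ℚ) : ℝ)) := by
      apply IsUltrametricDist.norm_sum_le_of_forall_le_of_nonneg (by positivity)
      intro S hS
      rw [Finset.mem_erase, Finset.mem_powersetCard] at hS
      obtain ⟨hne, _, hcardS⟩ := hS
      have hex : ∃ i ∈ S, v' + 1 ≤ i.val := by
        by_contra hno
        push_neg at hno
        apply hne
        apply Finset.eq_of_subset_of_card_le
        · intro i hi
          rw [hS₀, Finset.mem_filter]
          exact ⟨Finset.mem_univ _, by have := hno i hi; omega⟩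
        · rw [hS₀card, hcardS]
      have := km_subset_sum_gt t' ht' S hcardS hex
      rw [hprodnorm S]
      rw [Real.rpow_le_rpow_left_iff hp]
      have : (((∑ j ∈ Finset.range v', t' j) + t' (v'+1) : ℚ) : ℝ)
          ≤ ((∑ i ∈ S, t' i.val : ℚ) : ℝ) := by exact_mod_cast this
      linarith
    have hlt : pR ^ (-(((∑ j ∈ Finset.range v', t' j) + t' (v'+1) : ℚ) : ℝ))
        < pR ^ (-((∑ j ∈ Finset.range (v'+1), t' j : ℚ) : ℝ)) := by
      rw [Real.rpow_lt_rpow_left_iff hp]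
      have hvd : v' + 1 < d ∨ v' + 1 = d := by omega
      have hts : t' v' ≤ t' (v'+1) := ht' (by omega)
      rcases hvd with h | h
      · have hst := hstrict h
        simp only [Nat.add_sub_cancel] at hst
        rw [Finset.sum_range_succ]
        have hst' : ((t' v' : ℚ) : ℝ) < ((t' (v'+1) : ℚ) : ℝ) := by exact_mod_cast hst
        push_cast
        linarith
      · -- v = d : the erase set must be empty, contradiction with hpos
        exfalso
        have : ∀ S ∈ (Finset.powersetCard (v'+1) (Finset.univ : Finset (Fin d))).erase S₀,
            False := by
          intro S hS
          rw [Finset.mem_erase, Finset.mem_powersetCard] at hS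
          obtain ⟨hne, hsub, hcardS⟩ := hS
          apply hne
          have hSuniv : S = Finset.univ := Finset.eq_of_subset_of_card_le hsub
            (by rw [hcardS, Finset.card_univ, Fintype.card_fin, h])
          have hS₀univ : S₀ = Finset.univ := Finset.eq_of_subset_of_card_le
            (Finset.subset_univ _) (by rw [hS₀card, Finset.card_univ, Fintype.card_fin, h])
          rw [hSuniv, hS₀univ]
        rcases Finset.card_pos.mp hpos with ⟨S, hS⟩
        exact this S hS
    rw [← hmain] at hlt
    rw [km_norm_add_eq (lt_of_le_of_lt hrest hlt), hmain]

lemma km_det_norm_le_one {F : Type*} [NormedField F] [IsUltrametricDist F]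
    {n : Type*} [Fintype n] [DecidableEq n] (M : Matrix n n F)
    (h : ∀ i j, ‖M i j‖ ≤ 1) : ‖M.det‖ ≤ 1 := by
  rw [Matrix.det_apply]
  apply IsUltrametricDist.norm_sum_le_of_forall_le_of_nonneg zero_le_one
  intro σ _
  have hs : ‖(Equiv.Perm.sign σ • ∏ i, M (σ i) i : F)‖ = ‖∏ i, M (σ i) i‖ := by
    rcases Int.units_eq_one_or (Equiv.Perm.sign σ) with h' | h' <;> simp [h']
  rw [hs, norm_prod]
  exact Finset.prod_le_one (fun i _ => norm_nonneg _) (fun i _ => h _ _)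

lemma km_filter_sum {M : Type*} [AddCommMonoid M] {d k : ℕ} (hk : k ≤ d)
    (f : Fin d → M) (f' : ℕ → M) (hf : ∀ n (h : n < d), f' n = f ⟨n, h⟩) :
    ∑ i ∈ Finset.univ.filter (fun i : Fin d => (i : ℕ) < k), f i
      = ∑ j ∈ Finset.range k, f' j := by
  rw [km_filter_card hk, Finset.sum_map, ← Fin.sum_univ_eq_sum_range (fun j => f' j) k]
  apply Finset.sum_congr rfl
  intro j _
  rw [hf j.val (lt_of_lt_of_le j.isLt hk)]
  rfl

lemma km_convex_combination (d : ℕ) (s' t' : ℕ → ℚ) (hs : Monotone s') (ht : Monotone t')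
    (hvert : ∀ v, v ≤ d → (v = 0 ∨ v = d ∨ (0 < v ∧ v < d ∧ t' (v-1) < t' v)) →
       ∑ i ∈ Finset.range v, s' i ≤ ∑ i ∈ Finset.range v, t' i) :
    ∀ k, k ≤ d → ∑ i ∈ Finset.range k, s' i ≤ ∑ i ∈ Finset.range k, t' i := by
  classical
  intro k hk
  set V : ℕ → Prop := fun v => (v = 0 ∨ v = d ∨ (0 < v ∧ v < d ∧ t' (v-1) < t' v)) with hV
  have hVdec : DecidablePred V := fun v => by rw [hV]; infer_instance
  by_cases hkV : V k
  · exact hvert k hk hkV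
  -- k is not a vertex; in particular 0 < k < d and t' (k-1) = t' k
  have hk0 : 0 < k := by
    rcases Nat.eq_zero_or_pos k with rfl | h
    · exact absurd (Or.inl rfl) hkV
    · exact h
  have hkd : k < d := by
    rcases lt_or_eq_of_le hk with h | h
    · exact h
    · exact absurd (Or.inr (Or.inl h)) hkV
  -- l : previous vertex
  set l := Nat.findGreatest V k with hl
  have hVl : V l := Nat.findGreatest_spec (Nat.zero_le k) (Or.inl rfl)
  have hlk : l ≤ k := Nat.findGreatest_le k
  have hlk' : l < k := lt_of_le_of_ne hlk (fun h => hkV (h ▸ hVl))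
  have hmaxl : ∀ j, l < j → j ≤ k → ¬ V j := fun j h1 h2 => Nat.findGreatest_is_greatest h1 h2
  -- m : next vertex
  have hEx : ∃ j, V (k + j) := ⟨d - k, Or.inr (Or.inl (by omega))⟩
  set m := k + Nat.find hEx with hm
  have hVm : V m := Nat.find_spec hEx
  have hkm : k ≤ m := Nat.le_add_right _ _
  have hkm' : k < m := lt_of_le_of_ne hkm (fun h => hkV (h ▸ hVm))
  have hmd : m ≤ d := by
    have : Nat.find hEx ≤ d - k := Nat.find_min' hEx (Or.inr (Or.inl (by omega)))
    omega
  have hminm : ∀ j, k ≤ j → j < m → ¬ V j := by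
    intro j h1 h2
    have hj : j = k + (j - k) := by omega
    rw [hj]
    exact Nat.find_min hEx (by omega)
  -- t' is constant = t' l on [l, m)
  have hconst : ∀ j, l ≤ j → j < m → t' j = t' l := by
    intro j hlj
    induction j, hlj using Nat.le_induction with
    | base => intro _; rfl
    | succ j hj ih =>
        intro hjm
        have hjm' : j < m := by omega
        have hnv : ¬ V (j+1) := by
          rcases Nat.lt_or_ge (j+1) k with h | h
          · exact hmaxl (j+1) (by omega) (by omega)
          · rcases Nat.eq_or_lt_of_le h with h' | h'
            · rw [← h']; exact hkV
            · exact hminm (j+1) (by omega) hjm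
        have h1 : 0 < j + 1 := Nat.succ_pos j
        have h2 : j + 1 < d := by omega
        have h3 : ¬ (t' j < t' (j+1)) := by
          intro hlt
          exact hnv (Or.inr (Or.inr ⟨h1, h2, by simpa using hlt⟩))
        have : t' (j+1) = t' j := le_antisymm (not_lt.mp h3) (ht (by omega))
        rw [this]
        exact ih (by omega)
  -- sums
  set Ss : ℕ → ℚ := fun n => ∑ i ∈ Finset.range n, s' i with hSs
  set Ts : ℕ → ℚ := fun n => ∑ i ∈ Finset.range n, t' i with hTs
  have hIcoS : ∀ a b : ℕ, a ≤ b → Ss b - Ss a = ∑ i ∈ Finset.Ico a b, s' i := by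
    intro a b hab; rw [hSs]; simp only []; rw [Finset.sum_Ico_eq_sub _ hab]
  have hIcoT : ∀ a b : ℕ, a ≤ b → Ts b - Ts a = ∑ i ∈ Finset.Ico a b, t' i := by
    intro a b hab; rw [hTs]; simp only []; rw [Finset.sum_Ico_eq_sub _ hab]
  set β : ℚ := s' (k-1) with hβ
  set c : ℚ := t' l with hc
  -- Ts is linear on [l, m]
  have hTlin : ∀ b, l ≤ b → b ≤ m → Ts b - Ts l = ((b - l : ℕ) : ℚ) * c := by
    intro b h1 h2
    rw [hIcoT l b h1]
    have : ∀ i ∈ Finset.Ico l b, t' i = c := by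
      intro i hi
      rw [Finset.mem_Ico] at hi
      exact hconst i hi.1 (by omega)
    rw [Finset.sum_congr rfl this, Finset.sum_const, Nat.card_Ico, nsmul_eq_mul]
  have h1 : Ss k - Ss l ≤ ((k - l : ℕ) : ℚ) * β := by
    rw [hIcoS l k hlk]
    calc ∑ i ∈ Finset.Ico l k, s' i ≤ (Finset.Ico l k).card • β := by
          apply Finset.sum_le_card_nsmul
          intro i hi
          rw [Finset.mem_Ico] at hi
          exact hs (by omega)
      _ = ((k - l : ℕ) : ℚ) * β := by rw [Nat.card_Ico, nsmul_eq_mul]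
  have h2 : ((m - k : ℕ) : ℚ) * β ≤ Ss m - Ss k := by
    rw [hIcoS k m hkm]
    calc ((m - k : ℕ) : ℚ) * β = (Finset.Ico k m).card • β := by rw [Nat.card_Ico, nsmul_eq_mul]
      _ ≤ ∑ i ∈ Finset.Ico k m, s' i := by
          apply Finset.card_nsmul_le_sum
          intro i hi
          rw [Finset.mem_Ico] at hi
          exact hs (by omega)
  have h3 : Ss l ≤ Ts l := hvert l (by omega) hVl
  have h4 : Ss m ≤ Ts m := hvert m hmd hVm
  have h5 : Ts k - Ts l = ((k - l : ℕ) : ℚ) * c := hTlin k hlk (le_of_lt hkm')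
  have h6 : Ts m - Ts l = ((m - l : ℕ) : ℚ) * c := hTlin m (by omega) le_rfl
  -- cast arithmetic
  have e1 : ((k - l : ℕ) : ℚ) = (k : ℚ) - l := by push_cast [Nat.cast_sub hlk]; ring
  have e2 : ((m - k : ℕ) : ℚ) = (m : ℚ) - k := by push_cast [Nat.cast_sub hkm]; ring
  have e3 : ((m - l : ℕ) : ℚ) = (m : ℚ) - l := by push_cast [Nat.cast_sub (by omega : l ≤ m)]; ring
  rw [e1] at h1 h5
  rw [e2] at h2
  rw [e3] at h6
  have hK : (l : ℚ) < (k : ℚ) := by exact_mod_cast hlk'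
  have hM : (k : ℚ) < (m : ℚ) := by exact_mod_cast hkm'
  show Ss k ≤ Ts k
  nlinarith [mul_le_mul_of_nonneg_left h1 (by linarith : (0:ℚ) ≤ (m:ℚ) - k),
             mul_le_mul_of_nonneg_left h2 (by linarith : (0:ℚ) ≤ (k:ℚ) - l),
             mul_le_mul_of_nonneg_left h3 (by linarith : (0:ℚ) ≤ (m:ℚ) - k),
             mul_le_mul_of_nonneg_left h4 (by linarith : (0:ℚ) ≤ (k:ℚ) - l)]

/-- Katz–Mazur comparison.  Let `D` be a `φ`-module over `ℚ_p` of dimension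
`d` and `M` a lattice spanned by a basis `e`, with elementary divisors
`p^{s_1}, …, p^{s_d}` of `φ(M)` in `M` (`s` increasing, encoded by the adapted
basis property), and let `t_1 ≤ … ≤ t_d` be the valuations of the eigenvalues
`α_i` of `φ` (in a normed extension `K`, `‖α_i‖ = p^{−t_i}`).  Then
`s_1 + ⋯ + s_k ≤ t_1 + ⋯ + t_k` for all `k`, with equality at `k = d`. -/
theorem stmt18 (p : ℕ) [Fact p.Prime]
    (D : Type*) [AddCommGroup D] [Module ℚ_[p] D]
    [Module.Finite ℚ_[p] D] [Module.Free ℚ_[p] D]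
    (d : ℕ) (φ : D ≃ₗ[ℚ_[p]] D)
    (e : Fin d → D) (hindep : LinearIndependent ℚ_[p] e)
    (hspan : Submodule.span ℚ_[p] (Set.range e) = ⊤)
    (s : Fin d → ℤ) (hsmono : Monotone s)
    (hM : {x : D | ∃ c : Fin d → ℤ_[p], x = ∑ i, ((c i : ℚ_[p])) • e i}
        = {x : D | ∃ c : Fin d → ℤ_[p],
            x = ∑ i, ((c i : ℚ_[p])) • (((p : ℚ_[p]) ^ (-(s i))) • φ (e i))})
    (K : Type*) [NormedField K] [Algebra ℚ_[p] K]
    (hiso : ∀ x : ℚ_[p], ‖algebraMap ℚ_[p] K x‖ = ‖x‖)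
    (α : Fin d → K)
    (hchar : (LinearMap.charpoly (φ : D →ₗ[ℚ_[p]] D)).map (algebraMap ℚ_[p] K)
        = ∏ i, (Polynomial.X - Polynomial.C (α i)))
    (t : Fin d → ℚ) (htmono : Monotone t)
    (hα : ∀ i, ‖α i‖ = (p : ℝ) ^ (-((t i : ℝ)))) :
    (∀ k : ℕ, k ≤ d →
      ∑ i ∈ Finset.univ.filter (fun i : Fin d => (i : ℕ) < k), (s i : ℚ)
        ≤ ∑ i ∈ Finset.univ.filter (fun i : Fin d => (i : ℕ) < k), t i) ∧
    ∑ i, (s i : ℚ) = ∑ i, t i := by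
  classical
  have hp1 : (1:ℝ) < (p:ℝ) := by exact_mod_cast (Fact.out : p.Prime).one_lt
  have hp0 : (0:ℝ) < (p:ℝ) := lt_trans one_pos hp1
  haveI hUK : IsUltrametricDist K := by
    apply IsUltrametricDist.isUltrametricDist_of_forall_norm_natCast_le_one
    intro n
    rw [← map_natCast (algebraMap ℚ_[p] K) n, hiso]
    have : ((n : ℤ) : ℚ_[p]) = (n : ℚ_[p]) := by push_cast; ring
    rw [← this]
    exact Padic.norm_int_le_one _
  rcases Nat.eq_zero_or_pos d with hd0 | hd0
  · have hE : IsEmpty (Fin d) := by rw [hd0]; infer_instance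
    constructor
    · intro k _; rw [Finset.univ_eq_empty]; simp
    · rw [Finset.univ_eq_empty]; simp
  -- main case : d > 0
  set φL : D →ₗ[ℚ_[p]] D := (φ : D →ₗ[ℚ_[p]] D) with hφL
  set b : Module.Basis (Fin d) ℚ_[p] D := Module.Basis.mk hindep (by rw [hspan]) with hbdef
  have hb : ∀ i, b i = e i := fun i => Module.Basis.mk_apply _ _ i
  have hpne : (p:ℚ_[p]) ≠ 0 := Nat.cast_ne_zero.mpr (Fact.out : p.Prime).ne_zero
  set f : Fin d → D := fun i => ((p : ℚ_[p]) ^ (-(s i))) • φ (e i) with hfdef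
  have hf1 : ∀ j, ∃ c : Fin d → ℤ_[p], f j = ∑ i, (c i : ℚ_[p]) • e i := by
    intro j
    have hmem : f j ∈ {x : D | ∃ c : Fin d → ℤ_[p],
        x = ∑ i, ((c i : ℚ_[p])) • (((p : ℚ_[p]) ^ (-(s i))) • φ (e i))} := by
      refine ⟨fun i => if i = j then 1 else 0, ?_⟩
      rw [Finset.sum_eq_single j]
      · simp [hfdef]
      · intro i _ hij; simp [hij]
      · intro h; exact absurd (Finset.mem_univ j) h
    rw [← hM] at hmem
    exact hmem
  have hf2 : ∀ j, ∃ c : Fin d → ℤ_[p], e j = ∑ i, (c i : ℚ_[p]) • f i := by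
    intro j
    have hmem : e j ∈ {x : D | ∃ c : Fin d → ℤ_[p], x = ∑ i, ((c i : ℚ_[p])) • e i} := by
      refine ⟨fun i => if i = j then 1 else 0, ?_⟩
      rw [Finset.sum_eq_single j]
      · simp
      · intro i _ hij; simp [hij]
      · intro h; exact absurd (Finset.mem_univ j) h
    rw [hM] at hmem
    obtain ⟨c, hc⟩ := hmem
    exact ⟨c, by rw [hc]⟩
  choose cf hcf using hf1
  choose ce hce using hf2
  set C : Matrix (Fin d) (Fin d) ℚ_[p] := Matrix.of (fun i j => ((cf j i : ℚ_[p]))) with hCdef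
  set C' : Matrix (Fin d) (Fin d) ℚ_[p] := Matrix.of (fun i j => ((ce j i : ℚ_[p]))) with hC'def
  have hcoord : ∀ (x : Fin d → ℚ_[p]) (z : D), z = ∑ i, x i • e i → ∀ i, b.repr z i = x i := by
    intro x z hz i
    have : z = ∑ i, x i • b i := by rw [hz]; exact Finset.sum_congr rfl (fun i _ => by rw [hb])
    rw [this, Module.Basis.repr_sum_self]
  have hdelta : ∀ j i : Fin d, b.repr (e j) i = if i = j then 1 else 0 := by
    intro j i
    apply hcoord (fun i => if i = j then 1 else 0) (e j) _ i
    rw [Finset.sum_eq_single j]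
    · simp
    · intro i _ hij; simp [hij]
    · intro h; exact absurd (Finset.mem_univ j) h
  have hCC' : C * C' = 1 := by
    ext k j
    have h1 : e j = ∑ k', (∑ i, C k' i * C' i j) • e k' := by
      calc e j = ∑ i, (ce j i : ℚ_[p]) • f i := hce j
        _ = ∑ i, (ce j i : ℚ_[p]) • (∑ k', (cf i k' : ℚ_[p]) • e k') :=
            Finset.sum_congr rfl (fun i _ => by rw [← hcf i])
        _ = ∑ i, ∑ k', ((cf i k' : ℚ_[p]) * (ce j i : ℚ_[p])) • e k' := by
            apply Finset.sum_congr rfl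
            intro i _
            rw [Finset.smul_sum]
            exact Finset.sum_congr rfl (fun k' _ => by rw [smul_smul, mul_comm])
        _ = ∑ k', (∑ i, C k' i * C' i j) • e k' := by
            rw [Finset.sum_comm]
            exact Finset.sum_congr rfl (fun k' _ => by rw [Finset.sum_smul]; rfl)
    have h2 := hcoord _ _ h1 k
    rw [hdelta j k] at h2
    rw [Matrix.mul_apply, ← h2, Matrix.one_apply]
  set A : Matrix (Fin d) (Fin d) ℚ_[p] := LinearMap.toMatrix b b φL with hAdef
  have hArepr : ∀ i j, A i j = (p:ℚ_[p]) ^ (s j) * C i j := by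
    intro i j
    rw [hAdef, LinearMap.toMatrix_apply]
    have hφe : φL (b j) = ∑ k, ((p:ℚ_[p]) ^ (s j) * C k j) • e k := by
      rw [hb]
      have hstep : φ (e j) = (p:ℚ_[p]) ^ (s j) • f j := by
        rw [hfdef]
        simp only [smul_smul, ← zpow_add₀ hpne]
        simp
      have : φL (e j) = φ (e j) := rfl
      rw [this, hstep, hcf j, Finset.smul_sum]
      exact Finset.sum_congr rfl (fun k _ => by rw [smul_smul, hCdef]; rfl)
    rw [hφe]
    exact hcoord _ _ rfl i
  have hCle : ∀ i j, ‖C i j‖ ≤ 1 := by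
    intro i j
    show ‖((cf j i : ℤ_[p]) : ℚ_[p])‖ ≤ 1
    rw [← PadicInt.norm_def]
    exact PadicInt.norm_le_one _
  have hC'le : ∀ i j, ‖C' i j‖ ≤ 1 := by
    intro i j
    show ‖((ce j i : ℤ_[p]) : ℚ_[p])‖ ≤ 1
    rw [← PadicInt.norm_def]
    exact PadicInt.norm_le_one _
  have hdetC : ‖C.det‖ = 1 := by
    have h1 : C.det * C'.det = 1 := by rw [← Matrix.det_mul, hCC', Matrix.det_one]
    have h2 : ‖C.det‖ * ‖C'.det‖ = 1 := by rw [← norm_mul, h1, norm_one]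
    have h3 := km_det_norm_le_one C hCle
    have h4 := km_det_norm_le_one C' hC'le
    nlinarith [norm_nonneg C.det, norm_nonneg C'.det]
  have hAeq : A = C * Matrix.diagonal (fun j => (p:ℚ_[p]) ^ (s j)) := by
    ext i j
    rw [hArepr, Matrix.mul_diagonal]
    ring
  set pR : ℝ := (p:ℝ) with hpR
  set w : Fin d → ℝ := fun j => pR ^ (-((s j : ℚ) : ℝ)) with hwdef
  have hzpow_norm : ∀ z : ℤ, ‖(p:ℚ_[p]) ^ z‖ = pR ^ (-((z:ℚ):ℝ)) := by
    intro z
    rw [Padic.norm_p_zpow, ← Real.rpow_intCast pR (-z)]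
    congr 1
    push_cast; ring
  have hAnorm : ∀ i j, ‖A i j‖ ≤ w j := by
    intro i j
    rw [hArepr, norm_mul, hzpow_norm]
    calc pR ^ (-((s j:ℚ):ℝ)) * ‖C i j‖ ≤ pR ^ (-((s j:ℚ):ℝ)) * 1 :=
          mul_le_mul_of_nonneg_left (hCle i j) (Real.rpow_nonneg hp0.le _)
      _ = w j := by rw [mul_one]
  -- extensions of s and t to ℕ
  set i₀ : ℕ → Fin d := fun n => if h : n < d then ⟨n, h⟩ else ⟨d-1, by omega⟩ with hi₀
  have hi₀lt : ∀ n (h : n < d), i₀ n = ⟨n, h⟩ := fun n h => dif_pos h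
  have hi₀mono : Monotone i₀ := by
    intro a b hab
    rw [hi₀]
    simp only
    split_ifs with ha hb hb
    · exact Fin.mk_le_mk.mpr hab
    · exact Fin.mk_le_mk.mpr (by omega)
    · exact Fin.mk_le_mk.mpr (by omega)
    · exact le_refl _
  set s' : ℕ → ℚ := fun n => (s (i₀ n) : ℚ) with hs'
  set t' : ℕ → ℚ := fun n => t (i₀ n) with ht'
  have hs'mono : Monotone s' := fun a b hab => by
    show ((s (i₀ a) : ℚ)) ≤ ((s (i₀ b) : ℚ))
    exact_mod_cast hsmono (hi₀mono hab)
  have ht'mono : Monotone t' := fun a b hab => htmono (hi₀mono hab)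
  have hs'val : ∀ n (h : n < d), s' n = (s ⟨n, h⟩ : ℚ) := by
    intro n h; rw [hs']; simp only; rw [hi₀lt n h]
  have ht'val : ∀ n (h : n < d), t' n = t ⟨n, h⟩ := by
    intro n h; rw [ht']; simp only; rw [hi₀lt n h]
  -- coefficient bound from the lattice
  have hcoeff_le : ∀ v, v ≤ d →
      ‖(φL.charpoly).coeff (d - v)‖ ≤ pR ^ (-((∑ j ∈ Finset.range v, s' j : ℚ) : ℝ)) := by
    intro v hv
    set r : ℝ := pR ^ (-(s' (min v (d-1)) : ℝ)) with hr
    have hrpos : 0 < r := Real.rpow_pos_of_pos hp0 _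
    have hbound := km_charpoly_coeff_bound A w r hrpos hAnorm (d - v)
    have hmax1 : ∀ j : Fin d, (j:ℕ) < v → max (w j) r = w j := by
      intro j hj
      apply max_eq_left
      rw [hr, hwdef]
      simp only
      rw [Real.rpow_le_rpow_left_iff hp1, neg_le_neg_iff]
      have hjle : j ≤ (⟨min v (d-1), by omega⟩ : Fin d) := by
        rw [Fin.le_def]
        simp only
        omega
      have hsle : s j ≤ s (i₀ (min v (d-1))) := by
        rw [hi₀lt (min v (d-1)) (by omega)]
        exact hsmono hjle
      show ((s j : ℚ) : ℝ) ≤ ((s (i₀ (min v (d-1))) : ℚ) : ℝ)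
      exact_mod_cast hsle
    have hmax2 : ∀ j : Fin d, ¬((j:ℕ) < v) → max (w j) r = r := by
      intro j hj
      apply max_eq_right
      rw [hr, hwdef]
      simp only
      rw [Real.rpow_le_rpow_left_iff hp1, neg_le_neg_iff]
      have hjge : (⟨min v (d-1), by omega⟩ : Fin d) ≤ j := by
        rw [Fin.le_def]
        simp only
        omega
      have hsge : s (i₀ (min v (d-1))) ≤ s j := by
        rw [hi₀lt (min v (d-1)) (by omega)]
        exact hsmono hjge
      show ((s (i₀ (min v (d-1))) : ℚ) : ℝ) ≤ ((s j : ℚ) : ℝ)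
      exact_mod_cast hsge
    have hfiltcard : (Finset.univ.filter (fun j : Fin d => (j:ℕ) < v)).card = v := by
      rw [km_filter_card hv, Finset.card_map, Finset.card_univ, Fintype.card_fin]
    have hnotcard : (Finset.univ.filter (fun j : Fin d => ¬((j:ℕ) < v))).card = d - v := by
      have hsumcard := Finset.card_filter_add_card_filter_not
        (s := (Finset.univ : Finset (Fin d))) (p := fun j : Fin d => (j:ℕ) < v)
      rw [hfiltcard, Finset.card_univ, Fintype.card_fin] at hsumcard
      omega
    have hprodmax : ∏ j, max (w j) r
        = pR ^ (-((∑ j ∈ Finset.range v, s' j : ℚ) : ℝ)) * r ^ (d - v) := by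
      rw [← Finset.prod_filter_mul_prod_filter_not Finset.univ (fun j : Fin d => (j:ℕ) < v)]
      congr 1
      · rw [Finset.prod_congr rfl (fun j hj => hmax1 j (Finset.mem_filter.mp hj).2)]
        have hw : ∀ j ∈ Finset.univ.filter (fun j : Fin d => (j:ℕ) < v),
            w j = pR ^ (-((s j:ℚ):ℝ)) := fun j _ => rfl
        rw [Finset.prod_congr rfl hw, ← Real.rpow_sum_of_pos hp0]
        congr 1
        rw [km_filter_sum hv (fun j : Fin d => -((s j:ℚ):ℝ)) (fun n => -((s' n):ℝ))
          (fun n h => by show -((s' n : ℚ) : ℝ) = -((s ⟨n, h⟩ : ℚ) : ℝ); rw [hs'val n h])]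
        push_cast
        rw [← Finset.sum_neg_distrib]
      · rw [Finset.prod_congr rfl (fun j hj => hmax2 j (Finset.mem_filter.mp hj).2),
          Finset.prod_const, hnotcard]
    rw [hprodmax] at hbound
    have hchA : A.charpoly = φL.charpoly := LinearMap.charpoly_toMatrix φL b
    rw [hchA] at hbound
    have hrpow : (0:ℝ) < r ^ (d - v) := by positivity
    exact le_of_mul_le_mul_right hbound hrpow
  -- vertex equality from the eigenvalues
  have hcoeff_eq : ∀ v, 0 < v → v ≤ d → (v < d → t' (v-1) < t' v) →
      ‖(φL.charpoly).coeff (d - v)‖ = pR ^ (-((∑ j ∈ Finset.range v, t' j : ℚ) : ℝ)) := by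
    intro v hv0 hv hstrict
    have hαt : ∀ i : Fin d, ‖α i‖ = pR ^ (-(t' i.val : ℝ)) := by
      intro i
      rw [hα i, ht'val i.val i.isLt]
    have hK := km_vertex_coeff α t' ht'mono pR hp1 hαt v hv0 hv hstrict
    rw [← hchar, Polynomial.coeff_map, hiso] at hK
    exact hK
  have hvertineq : ∀ v, 0 < v → v ≤ d → (v < d → t' (v-1) < t' v) →
      (∑ j ∈ Finset.range v, s' j) ≤ ∑ j ∈ Finset.range v, t' j := by
    intro v hv0 hv hstrict
    have h1 := hcoeff_le v hv
    have h2 := hcoeff_eq v hv0 hv hstrict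
    rw [h2, Real.rpow_le_rpow_left_iff hp1, neg_le_neg_iff] at h1
    exact_mod_cast h1
  -- equality at v = d
  have hdetA : ‖A.det‖ = pR ^ (-((∑ j ∈ Finset.range d, s' j : ℚ) : ℝ)) := by
    rw [hAeq, Matrix.det_mul, Matrix.det_diagonal, norm_mul, hdetC, one_mul, norm_prod]
    have hterm : ∀ j ∈ (Finset.univ : Finset (Fin d)),
        ‖(p:ℚ_[p]) ^ (s j)‖ = pR ^ (-((s j:ℚ):ℝ)) := fun j _ => hzpow_norm (s j)
    rw [Finset.prod_congr rfl hterm, ← Real.rpow_sum_of_pos hp0]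
    congr 1
    have huniv : (Finset.univ : Finset (Fin d))
        = Finset.univ.filter (fun j : Fin d => (j:ℕ) < d) :=
      (Finset.filter_true_of_mem (fun i _ => i.isLt)).symm
    rw [huniv, km_filter_sum (le_refl d) (fun j : Fin d => -((s j:ℚ):ℝ))
      (fun n => -((s' n):ℝ)) (fun n h => by
        show -((s' n : ℚ) : ℝ) = -((s ⟨n, h⟩ : ℚ) : ℝ); rw [hs'val n h])]
    push_cast
    rw [← Finset.sum_neg_distrib]
  have hcoeff0 : ‖(φL.charpoly).coeff 0‖ = ‖A.det‖ := by
    have hchA : A.charpoly = φL.charpoly := LinearMap.charpoly_toMatrix φL b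
    rw [← hchA, Matrix.det_eq_sign_charpoly_coeff, norm_mul]
    have hone : ‖((-1:ℚ_[p]))^(Fintype.card (Fin d))‖ = 1 := by
      rw [norm_pow, norm_neg, norm_one, one_pow]
    rw [hone, one_mul]
  have heqd : (∑ j ∈ Finset.range d, s' j) = ∑ j ∈ Finset.range d, t' j := by
    have h2 := hcoeff_eq d hd0 le_rfl (fun h => absurd h (lt_irrefl d))
    rw [Nat.sub_self, hcoeff0, hdetA] at h2
    have hle1 : (((∑ j ∈ Finset.range d, s' j : ℚ)) : ℝ)
        ≤ ((∑ j ∈ Finset.range d, t' j : ℚ) : ℝ) := by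
      have := le_of_eq h2.symm
      rw [Real.rpow_le_rpow_left_iff hp1, neg_le_neg_iff] at this
      exact this
    have hle2 : (((∑ j ∈ Finset.range d, t' j : ℚ)) : ℝ)
        ≤ ((∑ j ∈ Finset.range d, s' j : ℚ) : ℝ) := by
      have := le_of_eq h2
      rw [Real.rpow_le_rpow_left_iff hp1, neg_le_neg_iff] at this
      exact this
    exact_mod_cast le_antisymm hle1 hle2
  have hvert : ∀ v, v ≤ d → (v = 0 ∨ v = d ∨ (0 < v ∧ v < d ∧ t' (v-1) < t' v)) →
      ∑ i ∈ Finset.range v, s' i ≤ ∑ i ∈ Finset.range v, t' i := by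
    intro v hv hV
    rcases hV with rfl | rfl | ⟨h0, h1, h2⟩
    · simp
    · exact le_of_eq heqd
    · exact hvertineq v h0 (le_of_lt h1) (fun _ => h2)
  have hmain := km_convex_combination d s' t' hs'mono ht'mono hvert
  constructor
  · intro k hk
    rw [km_filter_sum hk (fun i : Fin d => (s i : ℚ)) s' (fun n h => hs'val n h),
        km_filter_sum hk t t' (fun n h => ht'val n h)]
    exact hmain k hk
  · have hsu : ∑ i, (s i : ℚ) = ∑ j ∈ Finset.range d, s' j := by
      rw [← km_filter_sum (le_refl d) (fun i : Fin d => (s i : ℚ)) s' (fun n h => hs'val n h)]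
      congr 1
      exact (Finset.filter_true_of_mem (fun i _ => i.isLt)).symm
    have htu : ∑ i, t i = ∑ j ∈ Finset.range d, t' j := by
      rw [← km_filter_sum (le_refl d) t t' (fun n h => ht'val n h)]
      congr 1
      exact (Finset.filter_true_of_mem (fun i _ => i.isLt)).symm
    rw [hsu, htu, heqd]
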